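/- Under the alignment condition, for every α > 0 and every x ∈ ℝ², div g_α(x) = (α/(l(H(x)) + α)) · n(H(x))² · D_H(x) − H(x) · Λ(x) · Θ_α(H(x)), where Θ_α(h) = α l'(h) n(h)² / (2(l(h)+α)²) − α n(h) n'(h)/(l(h)+α). -/

import Mathlib

noncomputable section

/-- The factorized Hamiltonian `H(x₁,x₂) = h₁(x₁)·h₂(x₂)`. -/
def Ham (h₁ h₂ : ℝ → ℝ) : ℝ × ℝ → ℝ := fun x => h₁ x.1 * h₂ x.2

/-- The Hamiltonian vector field `ξ = ∇⊥H = (−h₁h₂', h₁'h₂)`. -/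
def xiField (h₁ h₂ : ℝ → ℝ) : ℝ × ℝ → ℝ × ℝ :=
  fun x => (-(h₁ x.1 * deriv h₂ x.2), deriv h₁ x.1 * h₂ x.2)

/-- The divergence of a vector field on `ℝ²`. -/
def divR2 (V : ℝ × ℝ → ℝ × ℝ) (x : ℝ × ℝ) : ℝ :=
  (fderiv ℝ V x (1, 0)).1 + (fderiv ℝ V x (0, 1)).2

/-- The function `Λ = 2(h₁')²(h₂')² − (h₁')²h₂h₂'' − h₁h₁''(h₂')²`. -/
def LambdaFn (h₁ h₂ : ℝ → ℝ) : ℝ × ℝ → ℝ := fun x =>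
  2 * (deriv h₁ x.1) ^ 2 * (deriv h₂ x.2) ^ 2 -
    (deriv h₁ x.1) ^ 2 * (h₂ x.2 * deriv (deriv h₂) x.2) -
    (h₁ x.1 * deriv (deriv h₁) x.1) * (deriv h₂ x.2) ^ 2

/-- The function `D_H = (h₁')²(h₂')² − h₁h₁''h₂h₂''`. -/
def DHFn (h₁ h₂ : ℝ → ℝ) : ℝ × ℝ → ℝ := fun x =>
  (deriv h₁ x.1) ^ 2 * (deriv h₂ x.2) ^ 2 -
    (h₁ x.1 * deriv (deriv h₁) x.1) * (h₂ x.2 * deriv (deriv h₂) x.2)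

/-- The inertial drift `g_α = β_α ν² Dξ ξ` under the alignment condition. -/
def driftG (h₁ h₂ l r : ℝ → ℝ) (α : ℝ) : ℝ × ℝ → ℝ × ℝ := fun x =>
  (α / (2 * (l (Ham h₁ h₂ x) + α)) * (r (Ham h₁ h₂ x) / l (Ham h₁ h₂ x)) ^ 2) •
    fderiv ℝ (xiField h₁ h₂) x (xiField h₁ h₂ x)

/-- The scalar profile `Θ_α` of the divergence decomposition, where `n = r/l`. -/
def ThetaFn (l r : ℝ → ℝ) (α : ℝ) (s : ℝ) : ℝ :=
  α * deriv l s * (r s / l s) ^ 2 / (2 * (l s + α) ^ 2) -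
    α * (r s / l s) * deriv (fun h => r h / l h) s / (l s + α)

/-! ### Auxiliary material for the proof -/

/-- The scalar factor `c_α = β_α ν²` appearing in the drift. -/
def cFn (l r : ℝ → ℝ) (α : ℝ) (s : ℝ) : ℝ :=
  α / (2 * (l s + α)) * (r s / l s) ^ 2

/-- Fréchet derivative of a separated product `u(x₁)·w(x₂)`. -/
lemma hasFDerivAt_mulsep (u w : ℝ → ℝ) {u' w' : ℝ} {x : ℝ × ℝ}
    (hu : HasDerivAt u u' x.1) (hw : HasDerivAt w w' x.2) :
    HasFDerivAt (fun p : ℝ × ℝ => u p.1 * w p.2)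
      ((u' * w x.2) • ContinuousLinearMap.fst ℝ ℝ ℝ +
        (u x.1 * w') • ContinuousLinearMap.snd ℝ ℝ ℝ) x := by
  have h1 : HasFDerivAt (fun p : ℝ × ℝ => u p.1)
      (u' • ContinuousLinearMap.fst ℝ ℝ ℝ) x :=
    hu.comp_hasFDerivAt x hasFDerivAt_fst
  have h2 : HasFDerivAt (fun p : ℝ × ℝ => w p.2)
      (w' • ContinuousLinearMap.snd ℝ ℝ ℝ) x :=
    hw.comp_hasFDerivAt x hasFDerivAt_snd
  have h := h1.mul h2
  exact h.congr_fderiv (by ext p <;> simp [smul_smul] <;> ring)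

lemma diff_of_contDiff3 (h : ℝ → ℝ) (hh : ContDiff ℝ 3 h) :
    Differentiable ℝ h ∧ Differentiable ℝ (deriv h) ∧
      Differentiable ℝ (deriv (deriv h)) := by
  have hh' : ContDiff ℝ (2 + 1) h := by exact_mod_cast hh
  have h1 : ContDiff ℝ 2 (deriv h) := (contDiff_succ_iff_deriv.mp hh').2.2
  have h1' : ContDiff ℝ (1 + 1 : ℕ) (deriv h) := by exact_mod_cast h1
  have h2 : ContDiff ℝ 1 (deriv (deriv h)) := (contDiff_succ_iff_deriv.mp h1').2.2
  exact ⟨hh.differentiable (by norm_num), h1.differentiable (by norm_num),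
    h2.differentiable (by norm_num)⟩

lemma hasDerivAt_cFn (l r : ℝ → ℝ) (hl : ContDiff ℝ 2 l) (hr : ContDiff ℝ 2 r)
    (α s : ℝ) (hls : l s ≠ 0) (hlsa : l s + α ≠ 0) :
    HasDerivAt (cFn l r α) (-(ThetaFn l r α s)) s := by
  have hld : DifferentiableAt ℝ l s := (hl.differentiable (by norm_num)).differentiableAt
  have hrd : DifferentiableAt ℝ r s := (hr.differentiable (by norm_num)).differentiableAt
  have hn : DifferentiableAt ℝ (fun h => r h / l h) s := hrd.div hld hls
  have hnd : HasDerivAt (fun h => r h / l h) (deriv (fun h => r h / l h) s) s :=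
    hn.hasDerivAt
  have h1 : HasDerivAt (fun t => 2 * (l t + α)) (2 * deriv l s) s :=
    (hld.hasDerivAt.add_const α).const_mul 2
  have h2 := (hasDerivAt_const s α).div h1 (by
    intro h; exact hlsa (by linarith [mul_eq_zero.mp h]))
  have h3 := hnd.pow 2
  have h := h2.mul h3
  exact h.congr_deriv (by
    unfold ThetaFn
    simp only [Pi.pow_apply, Pi.div_apply]
    generalize deriv (fun h => r h / l h) s = d
    rw [show (2:ℕ) - 1 = 1 from rfl, pow_one]
    field_simp
    ring)

/-- The drift written out explicitly: `g_α = c_α(H) · (Dξ ξ)` componentwise. -/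
lemma driftG_eq (h₁ h₂ l r : ℝ → ℝ) (hreg₁ : ContDiff ℝ 3 h₁)
    (hreg₂ : ContDiff ℝ 3 h₂) (α : ℝ) :
    driftG h₁ h₂ l r α = fun y : ℝ × ℝ =>
      (cFn l r α (Ham h₁ h₂ y) *
          ((h₁ y.1 * deriv h₁ y.1) *
            ((deriv h₂ y.2) ^ 2 - h₂ y.2 * deriv (deriv h₂) y.2)),
        cFn l r α (Ham h₁ h₂ y) *
          (((deriv h₁ y.1) ^ 2 - h₁ y.1 * deriv (deriv h₁) y.1) *
            (h₂ y.2 * deriv h₂ y.2))) := by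
  obtain ⟨d1, d1', d1''⟩ := diff_of_contDiff3 h₁ hreg₁
  obtain ⟨d2, d2', d2''⟩ := diff_of_contDiff3 h₂ hreg₂
  funext y
  have hA : HasFDerivAt (fun p : ℝ × ℝ => h₁ p.1 * deriv h₂ p.2)
      ((deriv h₁ y.1 * deriv h₂ y.2) • ContinuousLinearMap.fst ℝ ℝ ℝ +
        (h₁ y.1 * deriv (deriv h₂) y.2) • ContinuousLinearMap.snd ℝ ℝ ℝ) y :=
    hasFDerivAt_mulsep h₁ (deriv h₂) (d1 y.1).hasDerivAt (d2' y.2).hasDerivAt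
  have hB : HasFDerivAt (fun p : ℝ × ℝ => deriv h₁ p.1 * h₂ p.2)
      ((deriv (deriv h₁) y.1 * h₂ y.2) • ContinuousLinearMap.fst ℝ ℝ ℝ +
        (deriv h₁ y.1 * deriv h₂ y.2) • ContinuousLinearMap.snd ℝ ℝ ℝ) y :=
    hasFDerivAt_mulsep (deriv h₁) h₂ (d1' y.1).hasDerivAt (d2 y.2).hasDerivAt
  have hxi : HasFDerivAt (xiField h₁ h₂) ((-((deriv h₁ y.1 * deriv h₂ y.2) • ContinuousLinearMap.fst ℝ ℝ ℝ +
        (h₁ y.1 * deriv (deriv h₂) y.2) • ContinuousLinearMap.snd ℝ ℝ ℝ)).prod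
        ((deriv (deriv h₁) y.1 * h₂ y.2) • ContinuousLinearMap.fst ℝ ℝ ℝ +
        (deriv h₁ y.1 * deriv h₂ y.2) • ContinuousLinearMap.snd ℝ ℝ ℝ)) y :=
    HasFDerivAt.prodMk (hA.neg) hB
  show (α / (2 * (l (Ham h₁ h₂ y) + α)) * (r (Ham h₁ h₂ y) / l (Ham h₁ h₂ y)) ^ 2) •
      fderiv ℝ (xiField h₁ h₂) y (xiField h₁ h₂ y) = _
  have hsc : α / (2 * (l (Ham h₁ h₂ y) + α)) * (r (Ham h₁ h₂ y) / l (Ham h₁ h₂ y)) ^ 2 =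
      cFn l r α (Ham h₁ h₂ y) := rfl
  rw [hxi.fderiv, hsc]
  refine Prod.ext ?_ ?_ <;>
    · simp only [xiField, ContinuousLinearMap.prod_apply, ContinuousLinearMap.neg_apply,
        ContinuousLinearMap.add_apply, ContinuousLinearMap.smul_apply,
        ContinuousLinearMap.coe_fst', ContinuousLinearMap.coe_snd', smul_eq_mul,
        Prod.smul_fst, Prod.smul_snd]
      ring

/-- Structure of `div g_α` under the alignment condition:
`div g_α = (α/(l∘H + α)) n(H)² D_H − H·Λ·Θ_α(H)`. -/
theorem div_drift_decomposition
    (L l₀ r₀ : ℝ) (hL : 0 < L) (hl₀ : 0 < l₀) (hr₀ : 0 < r₀)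
    (h₁ h₂ : ℝ → ℝ)
    (hreg₁ : ContDiff ℝ 3 h₁) (hreg₂ : ContDiff ℝ 3 h₂)
    (hper₁ : Function.Periodic h₁ L) (hper₂ : Function.Periodic h₂ L)
    (hbd₁ : ∀ x : ℝ, |h₁ x| ≤ 1) (hbd₂ : ∀ x : ℝ, |h₂ x| ≤ 1)
    (hmax₁ : ∃ x : ℝ, |h₁ x| = 1) (hmax₂ : ∃ x : ℝ, |h₂ x| = 1)
    (l r : ℝ → ℝ) (hlreg : ContDiff ℝ 2 l) (hrreg : ContDiff ℝ 2 r)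
    (hlb : ∀ s ∈ Set.Icc (-1 : ℝ) 1, l₀ ≤ l s)
    (hrb : ∀ s ∈ Set.Icc (-1 : ℝ) 1, r₀ ≤ (r s) ^ 2) :
    ∀ α : ℝ, 0 < α → ∀ x : ℝ × ℝ,
      divR2 (driftG h₁ h₂ l r α) x =
        α / (l (Ham h₁ h₂ x) + α) * (r (Ham h₁ h₂ x) / l (Ham h₁ h₂ x)) ^ 2 *
            DHFn h₁ h₂ x -
          Ham h₁ h₂ x * LambdaFn h₁ h₂ x * ThetaFn l r α (Ham h₁ h₂ x) := by
  intro α hα x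
  obtain ⟨d1, d1', d1''⟩ := diff_of_contDiff3 h₁ hreg₁
  obtain ⟨d2, d2', d2''⟩ := diff_of_contDiff3 h₂ hreg₂
  -- bounds on H
  have habs : |Ham h₁ h₂ x| ≤ 1 := by
    rw [show Ham h₁ h₂ x = h₁ x.1 * h₂ x.2 from rfl, abs_mul]
    exact mul_le_one₀ (hbd₁ x.1) (abs_nonneg _) (hbd₂ x.2)
  have hsmem : Ham h₁ h₂ x ∈ Set.Icc (-1 : ℝ) 1 := by
    have := abs_le.mp habs; exact ⟨this.1, this.2⟩
  have hlpos : 0 < l (Ham h₁ h₂ x) := lt_of_lt_of_le hl₀ (hlb _ hsmem)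
  have hls : l (Ham h₁ h₂ x) ≠ 0 := ne_of_gt hlpos
  have hlsa : l (Ham h₁ h₂ x) + α ≠ 0 := ne_of_gt (add_pos hlpos hα)
  -- derivative of the scalar factor along H
  have hc : HasDerivAt (cFn l r α) (-(ThetaFn l r α (Ham h₁ h₂ x))) (Ham h₁ h₂ x) :=
    hasDerivAt_cFn l r hlreg hrreg α _ hls hlsa
  have hH : HasFDerivAt (Ham h₁ h₂)
      ((deriv h₁ x.1 * h₂ x.2) • ContinuousLinearMap.fst ℝ ℝ ℝ +
        (h₁ x.1 * deriv h₂ x.2) • ContinuousLinearMap.snd ℝ ℝ ℝ) x :=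
    hasFDerivAt_mulsep h₁ h₂ (d1 x.1).hasDerivAt (d2 x.2).hasDerivAt
  have hcH : HasFDerivAt (fun y => cFn l r α (Ham h₁ h₂ y))
      ((-(ThetaFn l r α (Ham h₁ h₂ x))) •
        ((deriv h₁ x.1 * h₂ x.2) • ContinuousLinearMap.fst ℝ ℝ ℝ +
          (h₁ x.1 * deriv h₂ x.2) • ContinuousLinearMap.snd ℝ ℝ ℝ)) x :=
    hc.comp_hasFDerivAt x hH
  -- derivatives of the two separated factors
  have hu : HasDerivAt (fun t => h₁ t * deriv h₁ t)
      (deriv h₁ x.1 * deriv h₁ x.1 + h₁ x.1 * deriv (deriv h₁) x.1) x.1 :=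
    (d1 x.1).hasDerivAt.mul (d1' x.1).hasDerivAt
  have hw := (((d2' x.2).hasDerivAt.pow 2).sub
    ((d2 x.2).hasDerivAt.mul (d2'' x.2).hasDerivAt))
  have hv := (((d1' x.1).hasDerivAt.pow 2).sub
    ((d1 x.1).hasDerivAt.mul (d1'' x.1).hasDerivAt))
  have hz : HasDerivAt (fun t => h₂ t * deriv h₂ t)
      (deriv h₂ x.2 * deriv h₂ x.2 + h₂ x.2 * deriv (deriv h₂) x.2) x.2 :=
    (d2 x.2).hasDerivAt.mul (d2' x.2).hasDerivAt
  have hF1 := hasFDerivAt_mulsep (fun t => h₁ t * deriv h₁ t)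
      (fun t => (deriv h₂ t) ^ 2 - h₂ t * deriv (deriv h₂) t) hu hw
  have hF2 := hasFDerivAt_mulsep (fun t => (deriv h₁ t) ^ 2 - h₁ t * deriv (deriv h₁) t)
      (fun t => h₂ t * deriv h₂ t) hv hz
  have hG1 := hcH.mul hF1
  have hG2 := hcH.mul hF2
  have hG := HasFDerivAt.prodMk hG1 hG2
  simp only [Pi.mul_apply] at hG
  rw [driftG_eq h₁ h₂ l r hreg₁ hreg₂ α]
  unfold divR2
  rw [hG.fderiv]
  simp only [ContinuousLinearMap.prod_apply, ContinuousLinearMap.add_apply,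
    ContinuousLinearMap.smul_apply, ContinuousLinearMap.coe_fst',
    ContinuousLinearMap.coe_snd', smul_eq_mul]
  unfold cFn DHFn LambdaFn
  rw [show Ham h₁ h₂ x = h₁ x.1 * h₂ x.2 from rfl]
  have hls' : l (h₁ x.1 * h₂ x.2) ≠ 0 := hls
  have hlsa' : l (h₁ x.1 * h₂ x.2) + α ≠ 0 := hlsa
  field_simp [hls', hlsa']
  ring
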